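/- Let B ∈ ℤ^{n×n} with det B > 0, B₊ = max{B,0}, B₋ = max{-B,0}, |B| = B₊ + B₋, A = adj B, 𝟙 = (1,...,1), α = (2·𝟙B₋ − 𝟙)A + 𝟙 and β = (2 det B − 1)·𝟙 + (2·𝟙B₋ − 𝟙)A. Then αB₊ − βB₋ = 𝟙|B| − det B · 𝟙 and βB₊ − αB₋ = (2 det B − 1)·𝟙|B| − det B · 𝟙. -/

import Mathlib

open Matrix

/-- With `α = (2·𝟙B₋ − 𝟙)A + 𝟙` and `β = (2 det B − 1)·𝟙 + (2·𝟙B₋ − 𝟙)A`, where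
`A = adj B`: `αB₊ − βB₋ = 𝟙|B| − det B·𝟙` and `βB₊ − αB₋ = (2 det B − 1)·𝟙|B| − det B·𝟙`. -/
theorem stmt18 (n : ℕ) (B : Matrix (Fin n) (Fin n) ℤ) (hB : 0 < B.det) :
    let Bp : Matrix (Fin n) (Fin n) ℤ := fun i k => max (B i k) 0
    let Bm : Matrix (Fin n) (Fin n) ℤ := fun i k => max (-(B i k)) 0
    let absB : Matrix (Fin n) (Fin n) ℤ := Bp + Bm
    let one : Fin n → ℤ := fun _ => 1
    let α : Fin n → ℤ := (fun k => 2 * (one ᵥ* Bm) k - 1) ᵥ* B.adjugate + one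
    let β : Fin n → ℤ :=
      (fun _ => 2 * B.det - 1) + (fun k => 2 * (one ᵥ* Bm) k - 1) ᵥ* B.adjugate
    (∀ j, (α ᵥ* Bp) j - (β ᵥ* Bm) j = (one ᵥ* absB) j - B.det) ∧
      (∀ j, (β ᵥ* Bp) j - (α ᵥ* Bm) j = (2 * B.det - 1) * (one ᵥ* absB) j - B.det) := by
  intro Bp Bm absB one α β
  set d := B.det with hd
  set w : Fin n → ℤ := fun k => 2 * (one ᵥ* Bm) k - 1 with hw
  set vA : Fin n → ℤ := w ᵥ* B.adjugate with hvA
  have hkeyv : vA ᵥ* B = d • w := by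
    rw [hvA, Matrix.vecMul_vecMul, Matrix.adjugate_mul]
    ext j
    simp [Matrix.vecMul, dotProduct, Matrix.one_apply, mul_comm, ← hd]
  have honeBm : ∀ j, (one ᵥ* Bm) j = ∑ i, Bm i j := by
    intro j
    simp [Matrix.vecMul, dotProduct, one]
  have hkey : ∀ j, ∑ i, vA i * B i j = d * (2 * (∑ i, Bm i j) - 1) := by
    intro j
    have := congrFun hkeyv j
    simpa [Matrix.vecMul, dotProduct, hw, one] using this
  have hBp : ∀ i j, Bp i j = B i j + Bm i j := by
    intro i j
    simp only [Bp, Bm]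
    omega
  have habs : ∀ j, (one ᵥ* absB) j = (∑ i, B i j) + 2 * ∑ i, Bm i j := by
    intro j
    have : (one ᵥ* absB) j = ∑ i, (B i j + 2 * Bm i j) := by
      simp only [Matrix.vecMul, dotProduct, one, absB, Matrix.add_apply, hBp, one_mul]
      exact Finset.sum_congr rfl fun i _ => by ring
    rw [this, Finset.sum_add_distrib, Finset.mul_sum]
  constructor
  · intro j
    have e1 : (α ᵥ* Bp) j - (β ᵥ* Bm) j
        = ∑ i, (vA i * B i j + B i j + (2 - 2 * d) * Bm i j) := by
      show (∑ i, α i * Bp i j) - ∑ i, β i * Bm i j = _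
      rw [← Finset.sum_sub_distrib]
      refine Finset.sum_congr rfl fun i _ => ?_
      simp only [α, β, hBp, Pi.add_apply, one]
      ring
    rw [e1, Finset.sum_add_distrib, Finset.sum_add_distrib, ← Finset.mul_sum,
      hkey j, habs j]
    ring
  · intro j
    have e2 : (β ᵥ* Bp) j - (α ᵥ* Bm) j
        = ∑ i, (vA i * B i j + (2 * d - 1) * B i j + (2 * d - 2) * Bm i j) := by
      show (∑ i, β i * Bp i j) - ∑ i, α i * Bm i j = _
      rw [← Finset.sum_sub_distrib]
      refine Finset.sum_congr rfl fun i _ => ?_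
      simp only [α, β, hBp, Pi.add_apply, one]
      ring
    rw [e2, Finset.sum_add_distrib, Finset.sum_add_distrib, ← Finset.mul_sum,
      ← Finset.mul_sum, hkey j, habs j]
    ring
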